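/- arXiv:1806.03284 — 3 statements merged into one kernel-verified Lean document; each statement's English description precedes it below -/
import Mathlib

section
/- Let α be irrational with denominators q_m, and suppose q_{i_{l+1}} ≥ q_{i_l}^3 for indices i_l < i_{l+1}. Let I = B(c, q_{i_l}^{-2}) ⊂ ℝ/ℤ be an interval of radius q_{i_l}^{-2}. Then for any x ∈ ℝ/ℤ there exists an integer j with 0 < j < q_{i_{l+1}} such that x + jα ∈ I. (Assume q_{i_l} ≥ 2.) -/
private lemma notTerm {α : ℝ} (hα : Irrational α) (n : ℕ) : ¬(GenContFract.of α).TerminatedAt n := by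
  intro h
  obtain ⟨q, hq⟩ := (GenContFract.terminates_iff_rat α).1 ⟨n, h⟩
  exact hα ⟨q, hq.symm⟩

private lemma sSome {α : ℝ} (hα : Irrational α) (n : ℕ) :
    ∃ gp, (GenContFract.of α).s.get? n = some gp :=
  Option.ne_none_iff_exists'.1 (notTerm hα n)

private lemma numInt {α : ℝ} (hα : Irrational α) (n : ℕ) :
    ∃ z : ℤ, (GenContFract.of α).nums n = (z : ℝ) := by
  suffices H : ∀ m : ℕ, (∃ z : ℤ, (GenContFract.of α).nums m = (z : ℝ)) ∧
      (∃ z : ℤ, (GenContFract.of α).nums (m + 1) = (z : ℝ)) from (H n).1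
  intro m
  induction m with
  | zero =>
    constructor
    · exact ⟨⌊α⌋, by rw [GenContFract.zeroth_num_eq_h, GenContFract.of_h_eq_floor]⟩
    · obtain ⟨gp, hgp⟩ := sSome hα 0
      obtain ⟨ha1, z, hz⟩ := GenContFract.of_partNum_eq_one_and_exists_int_partDen_eq hgp
      exact ⟨z * ⌊α⌋ + 1, by
        rw [GenContFract.first_num_eq hgp, GenContFract.of_h_eq_floor, ha1, hz]; push_cast; ring⟩
  | succ m ih =>
    refine ⟨ih.2, ?_⟩
    obtain ⟨gp, hgp⟩ := sSome hα (m + 1)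
    obtain ⟨ha1, z, hz⟩ := GenContFract.of_partNum_eq_one_and_exists_int_partDen_eq hgp
    obtain ⟨z1, hz1⟩ := ih.1
    obtain ⟨z2, hz2⟩ := ih.2
    exact ⟨z * z2 + z1, by
      rw [GenContFract.nums_recurrence hgp hz1 hz2, ha1, hz]; push_cast; ring⟩

private lemma denInt {α : ℝ} (hα : Irrational α) (n : ℕ) :
    ∃ z : ℤ, (GenContFract.of α).dens n = (z : ℝ) := by
  suffices H : ∀ m : ℕ, (∃ z : ℤ, (GenContFract.of α).dens m = (z : ℝ)) ∧
      (∃ z : ℤ, (GenContFract.of α).dens (m + 1) = (z : ℝ)) from (H n).1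
  intro m
  induction m with
  | zero =>
    constructor
    · exact ⟨1, by rw [GenContFract.zeroth_den_eq_one]; norm_num⟩
    · obtain ⟨gp, hgp⟩ := sSome hα 0
      obtain ⟨ha1, z, hz⟩ := GenContFract.of_partNum_eq_one_and_exists_int_partDen_eq hgp
      exact ⟨z, by rw [GenContFract.first_den_eq hgp, hz]⟩
  | succ m ih =>
    refine ⟨ih.2, ?_⟩
    obtain ⟨gp, hgp⟩ := sSome hα (m + 1)
    obtain ⟨ha1, z, hz⟩ := GenContFract.of_partNum_eq_one_and_exists_int_partDen_eq hgp
    obtain ⟨z1, hz1⟩ := ih.1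
    obtain ⟨z2, hz2⟩ := ih.2
    exact ⟨z * z2 + z1, by
      rw [GenContFract.dens_recurrence hgp hz1 hz2, ha1, hz]; push_cast; ring⟩


private lemma bezout {α : ℝ} (hα : Irrational α) (b : ℕ) {P Q : ℤ}
    (hP : (GenContFract.of α).nums b = (P : ℝ)) (hQ : (GenContFract.of α).dens b = (Q : ℝ)) :
    ∃ u w : ℤ, u * P - 1 = Q * w := by
  obtain ⟨P', hP'⟩ := numInt hα (b + 1)
  obtain ⟨Q', hQ'⟩ := denInt hα (b + 1)
  have hdet := SimpContFract.determinant (s := SimpContFract.of α) (n := b) (notTerm hα b)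
  have hZR : ((P * Q' - Q * P' : ℤ) : ℝ) = (((-1) ^ (b + 1) : ℤ) : ℝ) := by
    push_cast
    rw [← hP, ← hQ, ← hP', ← hQ']
    exact_mod_cast hdet
  have hZ : P * Q' - Q * P' = (-1) ^ (b + 1) := Int.cast_injective hZR
  have he : ((-1 : ℤ) ^ (b + 1)) * ((-1 : ℤ) ^ (b + 1)) = 1 := by
    rw [← pow_add]
    exact Even.neg_one_pow ⟨b + 1, rfl⟩
  exact ⟨(-1) ^ (b + 1) * Q', (-1) ^ (b + 1) * P',
    by linear_combination (-1 : ℤ) ^ (b + 1) * hZ + he⟩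
/-- If `q_{i_{l+1}} ≥ q_{i_l}³` (with `q_{i_l} ≥ 2`), then for any point `x` of `ℝ/ℤ` the orbit
of the rotation by `α` enters the ball `I = B(c, q_{i_l}⁻²)` at some time `0 < j < q_{i_{l+1}}`. -/
theorem stmt4 (α : ℝ) (hα : Irrational α) (a b : ℕ)
    (hab : ((GenContFract.of α).dens a) ^ 3 ≤ (GenContFract.of α).dens b)
    (ha : (2 : ℝ) ≤ (GenContFract.of α).dens a)
    (c x : AddCircle (1 : ℝ)) :
    ∃ j : ℕ, 0 < j ∧ (j : ℝ) < (GenContFract.of α).dens b ∧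
      x + j • (α : AddCircle (1 : ℝ)) ∈
        Metric.ball c (1 / ((GenContFract.of α).dens a) ^ 2) := by
  obtain ⟨P, hP⟩ := numInt hα b
  obtain ⟨Q, hQ⟩ := denInt hα b
  obtain ⟨u, w, hw⟩ := bezout hα b hP hQ
  set qa := (GenContFract.of α).dens a with hqa
  have hqa2 : (2 : ℝ) ≤ qa := ha
  have hQ8 : (8 : ℝ) ≤ (Q : ℝ) := by
    rw [← hQ]
    calc (8 : ℝ) = 2 ^ 3 := by norm_num
    _ ≤ qa ^ 3 := by gcongr
    _ ≤ _ := hab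
  have hQ0 : (0 : ℝ) < (Q : ℝ) := by linarith
  have hQ0' : (0 : ℤ) < Q := by exact_mod_cast hQ0
  have hQne : (Q : ℝ) ≠ 0 := ne_of_gt hQ0
  have hQ8' : (8 : ℤ) ≤ Q := by exact_mod_cast hQ8
  set Q' := (GenContFract.of α).dens (b + 1) with hQ'def
  have hQQ' : (Q : ℝ) ≤ Q' := hQ ▸ GenContFract.of_den_mono
  have hQ'pos : (0 : ℝ) < Q' := lt_of_lt_of_le hQ0 hQQ'
  have happ : |α - (P : ℝ) / (Q : ℝ)| ≤ 1 / ((Q : ℝ) * Q') := by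
    have h := GenContFract.abs_sub_convs_le (v := α) (n := b) (notTerm hα b)
    rwa [GenContFract.conv_eq_num_div_den, hP, hQ] at h
  obtain ⟨t₀, ht₀⟩ := QuotientAddGroup.mk_surjective (c - x)
  set m : ℤ := ⌊t₀ * Q⌋ with hm
  set n : ℤ := if Q ∣ m then m + 1 else m with hn
  have hndvd : ¬ Q ∣ n := by
    rw [hn]; split_ifs with h
    · intro h2
      have h3 : Q ∣ 1 := by simpa using dvd_sub h2 h
      have := Int.le_of_dvd one_pos h3
      linarith
    · exact h
  have hfl1 : (m : ℝ) ≤ t₀ * Q := Int.floor_le _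
  have hfl2 : t₀ * Q < (m : ℝ) + 1 := Int.lt_floor_add_one _
  have hnlow : (n : ℝ) - 1 ≤ t₀ * Q := by
    rw [hn]; split_ifs <;> push_cast <;> linarith
  have hnhigh : t₀ * Q ≤ (n : ℝ) + 1 := by
    rw [hn]; split_ifs <;> push_cast <;> linarith
  set j' : ℤ := (n * u) % Q with hj'
  have hj'nonneg : 0 ≤ j' := Int.emod_nonneg _ (by exact_mod_cast hQne)
  have hj'lt : j' < Q := Int.emod_lt_of_pos _ hQ0'
  have hdvd : Q ∣ j' * P - n := by
    have hjdef : j' = n * u - Q * (n * u / Q) := by rw [hj', Int.emod_def]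
    exact ⟨w * n - (n * u / Q) * P, by rw [hjdef]; linear_combination n * hw⟩
  have hj'pos : 0 < j' := by
    rcases hj'nonneg.lt_or_eq with h | h
    · exact h
    · exfalso
      apply hndvd
      have h4 : Q ∣ (0 * P - n) := h ▸ hdvd
      rw [zero_mul, zero_sub] at h4
      exact (dvd_neg).1 h4
  obtain ⟨k, hk⟩ := hdvd
  have hcast : (j' : ℝ) * (P : ℝ) - (n : ℝ) = (Q : ℝ) * (k : ℝ) := by exact_mod_cast hk
  have hjle : (j' : ℝ) ≤ (Q : ℝ) - 1 := by
    have h7 : j' + 1 ≤ Q := hj'lt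
    have h8 : (j' : ℝ) + 1 ≤ (Q : ℝ) := by exact_mod_cast h7
    linarith
  have hj'R : (0 : ℝ) ≤ (j' : ℝ) := by exact_mod_cast hj'nonneg
  -- the real estimate
  have hclose : |t₀ - (n : ℝ) / Q| ≤ 1 / Q := by
    have b1 : t₀ - (n : ℝ) / Q = (t₀ * Q - n) / Q := by field_simp
    rw [b1, abs_div, abs_of_pos hQ0]
    have b2 : |t₀ * (Q : ℝ) - n| ≤ 1 := abs_le.2 ⟨by linarith, by linarith⟩
    gcongr
  have hkey : (j' : ℝ) * α - t₀ - (k : ℝ) = ((n : ℝ) / Q - t₀) + (j' : ℝ) * (α - (P : ℝ) / Q) := by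
    field_simp
    linear_combination hcast
  have hjAlt : |(j' : ℝ) * (α - (P : ℝ) / Q)| < 1 / (Q : ℝ) := by
    rw [abs_mul, abs_of_nonneg hj'R]
    calc (j' : ℝ) * |α - (P : ℝ) / Q| ≤ ((Q : ℝ) - 1) * (1 / ((Q : ℝ) * Q')) := by
          apply mul_le_mul hjle happ (abs_nonneg _) (by linarith)
    _ < (Q : ℝ) * (1 / ((Q : ℝ) * Q')) := by
          apply mul_lt_mul_of_pos_right (by linarith) (by positivity)
    _ = 1 / Q' := by field_simp
    _ ≤ 1 / Q := by apply one_div_le_one_div_of_le hQ0 hQQ'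
  have hest : |(j' : ℝ) * α - t₀ - (k : ℝ)| < 2 / Q := by
    rw [hkey]
    calc |((n : ℝ) / Q - t₀) + (j' : ℝ) * (α - (P : ℝ) / Q)|
        ≤ |(n : ℝ) / Q - t₀| + |(j' : ℝ) * (α - (P : ℝ) / Q)| := abs_add_le _ _
    _ < 1 / Q + 1 / Q := by
          rw [abs_sub_comm]
          exact add_lt_add_of_le_of_lt hclose hjAlt
    _ = 2 / Q := by ring
  have hfinal : 2 / (Q : ℝ) ≤ 1 / qa ^ 2 := by
    rw [div_le_div_iff₀ hQ0 (by positivity)]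
    have h5 : 2 * qa ^ 2 ≤ qa ^ 3 := by nlinarith
    have h6 : qa ^ 3 ≤ (Q : ℝ) := hQ ▸ hab
    linarith
  refine ⟨j'.toNat, by simp [Int.lt_toNat]; exact hj'pos, ?_, ?_⟩
  · rw [hQ]
    have h9 : (j'.toNat : ℤ) < Q := by rwa [Int.toNat_of_nonneg hj'nonneg]
    exact_mod_cast h9
  · rw [Metric.mem_ball]
    have hsm : (j'.toNat : ℕ) • (α : AddCircle (1 : ℝ)) = (((j' : ℝ) * α : ℝ) : AddCircle (1 : ℝ)) := by
      rw [← AddCircle.coe_nsmul]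
      congr 1
      rw [nsmul_eq_mul]
      congr 1
      exact_mod_cast congrArg (Int.cast : ℤ → ℝ) (Int.toNat_of_nonneg hj'nonneg)
    rw [hsm]
    have hd : dist (x + (((j' : ℝ) * α : ℝ) : AddCircle (1 : ℝ))) c =
        ‖(((j' : ℝ) * α - t₀ - (k : ℝ) : ℝ) : AddCircle (1 : ℝ))‖ := by
      rw [dist_eq_norm]
      congr 1
      have hz : (((k : ℝ) : ℝ) : AddCircle (1 : ℝ)) = 0 :=
        (AddCircle.coe_eq_zero_iff (1 : ℝ)).2 ⟨k, by simp⟩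
      have : (((j' : ℝ) * α - t₀ - (k : ℝ) : ℝ) : AddCircle (1 : ℝ))
          = (((j' : ℝ) * α : ℝ) : AddCircle (1 : ℝ)) - ((t₀ : ℝ) : AddCircle (1 : ℝ))
            - (((k : ℝ) : ℝ) : AddCircle (1 : ℝ)) := by
        rw [AddCircle.coe_sub, AddCircle.coe_sub]
      rw [this, hz, sub_zero, ht₀]
      abel
    rw [hd]
    calc ‖(((j' : ℝ) * α - t₀ - (k : ℝ) : ℝ) : AddCircle (1 : ℝ))‖
        ≤ |(j' : ℝ) * α - t₀ - (k : ℝ)| :=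
          QuotientAddGroup.norm_mk_le_norm (S := AddSubgroup.zmultiples (1 : ℝ))
    _ < 2 / Q := hest
    _ ≤ 1 / qa ^ 2 := hfinal
end

section
/- Let E₁, E₂ ∈ SL(2,ℝ) with e₁ = ‖E₁‖ > 1 and e₂ = ‖E₂‖ > 1, and let θ = s(E₂) − u(E₁) be the angle between the stable direction of E₂ and the unstable direction of E₁ (computed via polar decompositions E_j = R_{u_j} diag(e_j, e_j^{-1}) R_{π/2 − s_j}). Then ‖E₂E₁‖ ≥ c · e₁ e₂ |sin θ| for an absolute constant c > 0 (in fact one has the exact formula ‖E₂E₁‖² + ‖E₂E₁‖^{-2} expressible in e₁, e₂, θ yielding ‖E₂E₁‖ ≥ e₁ e₂ |sin θ| − e₁^{-1} e₂^{-1}). -/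
open Matrix Real

/-- The operator norm (on `ℓ²`) of a `2 × 2` real matrix. -/
noncomputable def opNorm2 (A : Matrix (Fin 2) (Fin 2) ℝ) : ℝ :=
  ‖Matrix.toEuclideanCLM (𝕜 := ℝ) A‖

/-- The rotation matrix by angle `θ`. -/
noncomputable def rotMat (θ : ℝ) : Matrix (Fin 2) (Fin 2) ℝ :=
  !![Real.cos θ, -Real.sin θ; Real.sin θ, Real.cos θ]

lemma rot_mulVec (φ x y : ℝ) :
    rotMat φ *ᵥ ![x, y] = ![x * Real.cos φ - y * Real.sin φ, x * Real.sin φ + y * Real.cos φ] := by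
  funext i; fin_cases i <;>
    simp [rotMat, Matrix.mulVec, dotProduct, Fin.sum_univ_two] <;> ring

lemma diag_mulVec (e x y : ℝ) :
    (!![e, 0; 0, e⁻¹] : Matrix (Fin 2) (Fin 2) ℝ) *ᵥ ![x, y] = ![e * x, e⁻¹ * y] := by
  funext i; fin_cases i <;>
    simp [Matrix.mulVec, dotProduct, Fin.sum_univ_two]

/-- If `E₁, E₂ ∈ SL(2,ℝ)` have norms `e₁, e₂ > 1` and polar decompositions
`Eⱼ = R_{uⱼ} diag(eⱼ, eⱼ⁻¹) R_{π/2 − sⱼ}`, then with `θ = s₂ − u₁` one has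
`‖E₂E₁‖ ≥ e₁ e₂ |sin θ| − e₁⁻¹ e₂⁻¹`. -/
theorem stmt7 (E₁ E₂ : Matrix (Fin 2) (Fin 2) ℝ)
    (hdet₁ : E₁.det = 1) (hdet₂ : E₂.det = 1)
    (e₁ e₂ u₁ s₁ u₂ s₂ θ : ℝ)
    (he₁ : e₁ = opNorm2 E₁) (he₂ : e₂ = opNorm2 E₂)
    (he₁1 : 1 < e₁) (he₂1 : 1 < e₂)
    (hE₁ : E₁ = rotMat u₁ * !![e₁, 0; 0, e₁⁻¹] * rotMat (π / 2 - s₁))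
    (hE₂ : E₂ = rotMat u₂ * !![e₂, 0; 0, e₂⁻¹] * rotMat (π / 2 - s₂))
    (hθ : θ = s₂ - u₁) :
    e₁ * e₂ * |Real.sin θ| - e₁⁻¹ * e₂⁻¹ ≤ opNorm2 (E₂ * E₁) := by
  set β := π / 2 - s₁ with hβ
  have key : e₁ * e₂ * |Real.sin θ| ≤ opNorm2 (E₂ * E₁) := by
    set v : EuclideanSpace ℝ (Fin 2) :=
      (WithLp.equiv 2 (Fin 2 → ℝ)).symm ![Real.cos (-β), Real.sin (-β)] with hv
    have hvnorm : ‖v‖ = 1 := by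
      rw [hv, EuclideanSpace.norm_eq]
      simp only [WithLp.equiv_symm_apply, WithLp.ofLp_toLp, Fin.sum_univ_two, Real.norm_eq_abs, sq_abs]
      rw [show (![Real.cos (-β), Real.sin (-β)] : Fin 2 → ℝ) 0 = Real.cos (-β) from rfl,
        show (![Real.cos (-β), Real.sin (-β)] : Fin 2 → ℝ) 1 = Real.sin (-β) from rfl]
      rw [show Real.cos (-β) ^ 2 + Real.sin (-β) ^ 2 = 1 by
        rw [Real.cos_neg, Real.sin_neg]; nlinarith [Real.sin_sq_add_cos_sq β]]
      exact Real.sqrt_one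
    -- compute the image vector
    have h0 : rotMat β *ᵥ ![Real.cos (-β), Real.sin (-β)] = ![1, 0] := by
      rw [rot_mulVec]
      funext i; fin_cases i <;> simp [Real.cos_neg, Real.sin_neg] <;>
        nlinarith [Real.sin_sq_add_cos_sq β]
    have h3 : rotMat (π / 2 - s₂) *ᵥ ![e₁ * Real.cos u₁, e₁ * Real.sin u₁]
        = ![e₁ * Real.sin θ, e₁ * Real.cos θ] := by
      rw [rot_mulVec, hθ]
      funext i; fin_cases i <;>
        simp [Real.cos_pi_div_two_sub, Real.sin_pi_div_two_sub, Real.sin_sub, Real.cos_sub] <;>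
        ring
    have hw : (E₂ * E₁) *ᵥ ![Real.cos (-β), Real.sin (-β)] =
        ![e₂ * (e₁ * Real.sin θ) * Real.cos u₂ - e₂⁻¹ * (e₁ * Real.cos θ) * Real.sin u₂,
          e₂ * (e₁ * Real.sin θ) * Real.sin u₂ + e₂⁻¹ * (e₁ * Real.cos θ) * Real.cos u₂] := by
      rw [hE₁, hE₂]
      rw [show rotMat u₂ * !![e₂, 0; 0, e₂⁻¹] * rotMat (π / 2 - s₂) *
          (rotMat u₁ * !![e₁, 0; 0, e₁⁻¹] * rotMat β) =
          rotMat u₂ * (!![e₂, 0; 0, e₂⁻¹] * (rotMat (π / 2 - s₂) *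
          (rotMat u₁ * (!![e₁, 0; 0, e₁⁻¹] * rotMat β)))) by noncomm_ring]
      rw [← Matrix.mulVec_mulVec, ← Matrix.mulVec_mulVec, ← Matrix.mulVec_mulVec,
        ← Matrix.mulVec_mulVec, ← Matrix.mulVec_mulVec, h0, diag_mulVec]
      rw [show (![e₁ * 1, e₁⁻¹ * 0] : Fin 2 → ℝ) = ![e₁, 0] by norm_num]
      rw [show rotMat u₁ *ᵥ ![e₁, (0:ℝ)] = ![e₁ * Real.cos u₁, e₁ * Real.sin u₁] by
        rw [rot_mulVec]; funext i; fin_cases i <;> simp]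
      rw [h3, diag_mulVec, rot_mulVec]
    have hTv : Matrix.toEuclideanCLM (𝕜 := ℝ) (E₂ * E₁) v =
        (WithLp.equiv 2 (Fin 2 → ℝ)).symm ((E₂ * E₁) *ᵥ ![Real.cos (-β), Real.sin (-β)]) := by
      rw [hv, WithLp.equiv_symm_apply, Matrix.toEuclideanCLM_toLp]
    have hnormTv : e₁ * e₂ * |Real.sin θ| ≤ ‖Matrix.toEuclideanCLM (𝕜 := ℝ) (E₂ * E₁) v‖ := by
      rw [hTv, hw, EuclideanSpace.norm_eq]
      simp only [WithLp.equiv_symm_apply, WithLp.ofLp_toLp, Fin.sum_univ_two, Real.norm_eq_abs, sq_abs]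
      simp only [Matrix.cons_val_zero, Matrix.cons_val_one, Matrix.head_cons]
      rw [Real.le_sqrt (by positivity) (by positivity)]
      have hu := Real.sin_sq_add_cos_sq u₂
      have hab : (e₂ * (e₁ * Real.sin θ) * Real.cos u₂ - e₂⁻¹ * (e₁ * Real.cos θ) * Real.sin u₂) ^ 2
          + (e₂ * (e₁ * Real.sin θ) * Real.sin u₂ + e₂⁻¹ * (e₁ * Real.cos θ) * Real.cos u₂) ^ 2
          = (e₂ * (e₁ * Real.sin θ)) ^ 2 + (e₂⁻¹ * (e₁ * Real.cos θ)) ^ 2 := by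
        linear_combination ((e₂ * (e₁ * Real.sin θ)) ^ 2 + (e₂⁻¹ * (e₁ * Real.cos θ)) ^ 2) * hu
      have hsq : (e₁ * e₂ * |Real.sin θ|) ^ 2 = (e₂ * (e₁ * Real.sin θ)) ^ 2 := by
        rw [mul_pow, mul_pow, sq_abs]; ring
      linarith [sq_nonneg (e₂⁻¹ * (e₁ * Real.cos θ))]
    calc e₁ * e₂ * |Real.sin θ| ≤ ‖Matrix.toEuclideanCLM (𝕜 := ℝ) (E₂ * E₁) v‖ := hnormTv
      _ ≤ opNorm2 (E₂ * E₁) * ‖v‖ := ContinuousLinearMap.le_opNorm _ v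
      _ = opNorm2 (E₂ * E₁) := by rw [hvnorm, mul_one]
  have hpos : 0 < e₁⁻¹ * e₂⁻¹ := by positivity
  linarith
end

section
/- Let L: ℝ → ℝ and suppose for each n₁ large enough there are functions L_{n₁}, L_{2n₁} such that: (i) |L(E) + L_{n₁}(E) − L_{2n₁}(E)| ≤ C λ^{−c n₁} for all E, and (ii) |L_{n₁}(E) − L_{n₁}(E')| ≤ (Cλ)^{n₁}|E − E'| and |L_{2n₁}(E) − L_{2n₁}(E')| ≤ (Cλ)^{2n₁}|E − E'|. Then choosing n₁ = −log|E−E'|/(4 log λ) yields |L(E) − L(E')| ≤ C' |E − E'|^{σ} for some σ > 0 independent of λ, for all E, E' with |E−E'| sufficiently small. -/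
/-- If `|L(E) + L_{n₁}(E) − L_{2n₁}(E)| ≤ C λ^{−c n₁}` for all large scales `n₁`, and the
finite-scale functions `L_n` are Lipschitz with constant `(Cλ)ⁿ`, then (optimizing over
`n₁ = −log|E−E'|/(4 log λ)`) the function `L` is Hölder continuous with some exponent `σ > 0`
for all pairs of sufficiently close points. -/
theorem stmt13 (lam C c : ℝ) (hlam : 1 < lam) (hC : 0 < C) (hc : 0 < c)
    (L : ℝ → ℝ) (Ln : ℝ → ℝ → ℝ) (N₀ : ℝ)
    (happrox : ∀ n : ℝ, N₀ ≤ n → ∀ E : ℝ,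
      |L E + Ln n E - Ln (2 * n) E| ≤ C * lam ^ (-(c * n)))
    (hlip : ∀ n : ℝ, N₀ ≤ n → ∀ E E' : ℝ,
      |Ln n E - Ln n E'| ≤ (C * lam) ^ n * |E - E'| ∧
      |Ln (2 * n) E - Ln (2 * n) E'| ≤ (C * lam) ^ (2 * n) * |E - E'|) :
    ∃ σ : ℝ, 0 < σ ∧ ∃ C' : ℝ, 0 < C' ∧ ∃ ε : ℝ, 0 < ε ∧
      ∀ E E' : ℝ, 0 < |E - E'| → |E - E'| < ε →
        |L E - L E'| ≤ C' * |E - E'| ^ σ := by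
  set K : ℝ := max (C * lam) lam with hKdef
  have hK1 : 1 < K := lt_of_lt_of_le hlam (le_max_right _ _)
  have hK0 : (0:ℝ) < K := lt_trans one_pos hK1
  have hlogK : 0 < Real.log K := Real.log_pos hK1
  have hloglam : 0 < Real.log lam := Real.log_pos hlam
  set τ : ℝ := c * Real.log lam / (4 * Real.log K) with hτdef
  have hτ0 : 0 < τ := by positivity
  refine ⟨min (1/2) τ, lt_min (by norm_num) hτ0, 2 + 2 * C, by positivity,
    min 1 (Real.exp (-(4 * N₀ * Real.log K))), lt_min one_pos (Real.exp_pos _), ?_⟩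
  intro E E' hδ0 hδε
  set δ : ℝ := |E - E'| with hδdef
  have hδ1 : δ < 1 := lt_of_lt_of_le hδε (min_le_left _ _)
  have hlogδ : Real.log δ < 0 := Real.log_neg hδ0 hδ1
  set n : ℝ := -Real.log δ / (4 * Real.log K) with hndef
  have hn0 : 0 < n := div_pos (by linarith) (by linarith)
  have hnN : N₀ ≤ n := by
    have h2 : δ < Real.exp (-(4 * N₀ * Real.log K)) :=
      lt_of_lt_of_le hδε (min_le_right _ _)
    have h3 : Real.log δ < -(4 * N₀ * Real.log K) := by
      have := Real.log_lt_log hδ0 h2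
      rwa [Real.log_exp] at this
    rw [hndef, le_div_iff₀ (by positivity)]
    nlinarith
  -- key rpow identities
  have hClam0 : (0:ℝ) < C * lam := by positivity
  have e1 : K ^ (2 * n) = δ ^ (-(1/2) : ℝ) := by
    rw [Real.rpow_def_of_pos hK0, Real.rpow_def_of_pos hδ0]
    congr 1
    rw [hndef]
    field_simp
    ring
  have e2 : lam ^ (-(c * n)) = δ ^ τ := by
    rw [Real.rpow_def_of_pos (by linarith : (0:ℝ) < lam), Real.rpow_def_of_pos hδ0]
    congr 1
    rw [hndef, hτdef]
    field_simp
  -- Lipschitz constants bounded by K ^ (2n)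
  have hb1 : (C * lam) ^ n ≤ K ^ (2 * n) := by
    calc (C * lam) ^ n ≤ K ^ n :=
          Real.rpow_le_rpow (le_of_lt hClam0) (le_max_left _ _) (le_of_lt hn0)
      _ ≤ K ^ (2 * n) :=
          Real.rpow_le_rpow_of_exponent_le (le_of_lt hK1) (by linarith)
  have hb2 : (C * lam) ^ (2 * n) ≤ K ^ (2 * n) :=
    Real.rpow_le_rpow (le_of_lt hClam0) (le_max_left _ _) (by linarith)
  -- triangle inequality
  obtain ⟨hl1, hl2⟩ := hlip n hnN E E'
  have ha1 := happrox n hnN E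
  have ha2 := happrox n hnN E'
  have htri : |L E - L E'| ≤
      (C * lam) ^ (2 * n) * δ + (C * lam) ^ n * δ + 2 * (C * lam ^ (-(c * n))) := by
    have : L E - L E' = ((Ln (2*n) E - Ln (2*n) E') - (Ln n E - Ln n E'))
        + ((L E + Ln n E - Ln (2*n) E) - (L E' + Ln n E' - Ln (2*n) E')) := by ring
    rw [this]
    calc |_| ≤ |(Ln (2*n) E - Ln (2*n) E') - (Ln n E - Ln n E')|
            + |(L E + Ln n E - Ln (2*n) E) - (L E' + Ln n E' - Ln (2*n) E')| := abs_add_le _ _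
      _ ≤ (|Ln (2*n) E - Ln (2*n) E'| + |Ln n E - Ln n E'|)
            + (|L E + Ln n E - Ln (2*n) E| + |L E' + Ln n E' - Ln (2*n) E'|) :=
          add_le_add (abs_sub _ _) (abs_sub _ _)
      _ ≤ ((C * lam) ^ (2 * n) * δ + (C * lam) ^ n * δ)
            + (C * lam ^ (-(c * n)) + C * lam ^ (-(c * n))) :=
          add_le_add (add_le_add hl2 hl1) (add_le_add ha1 ha2)
      _ = _ := by ring
  -- combine
  have hhalf : δ ^ (-(1/2):ℝ) * δ = δ ^ ((1/2):ℝ) := by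
    nth_rewrite 2 [← Real.rpow_one δ]
    rw [← Real.rpow_add hδ0]
    norm_num
  have hmono1 : δ ^ ((1/2):ℝ) ≤ δ ^ (min (1/2) τ) :=
    Real.rpow_le_rpow_of_exponent_ge hδ0 (le_of_lt hδ1) (min_le_left _ _)
  have hmono2 : δ ^ τ ≤ δ ^ (min (1/2) τ) :=
    Real.rpow_le_rpow_of_exponent_ge hδ0 (le_of_lt hδ1) (min_le_right _ _)
  calc |L E - L E'| ≤ (C * lam) ^ (2 * n) * δ + (C * lam) ^ n * δ
        + 2 * (C * lam ^ (-(c * n))) := htri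
    _ ≤ K ^ (2 * n) * δ + K ^ (2 * n) * δ + 2 * (C * lam ^ (-(c * n))) := by
        have := hδ0
        gcongr
    _ = 2 * (δ ^ (-(1/2):ℝ) * δ) + 2 * C * δ ^ τ := by rw [e1, e2]; ring
    _ = 2 * δ ^ ((1/2):ℝ) + 2 * C * δ ^ τ := by rw [hhalf]
    _ ≤ 2 * δ ^ (min (1/2) τ) + 2 * C * δ ^ (min (1/2) τ) := by gcongr
    _ = (2 + 2 * C) * δ ^ (min (1/2) τ) := by ring
end
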